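/- Let D be a strongly connected tournament on a finite vertex type V with |V| = n, let k ≥ 2, let σ : Fin n ≃ V be an ordering of the vertices, and suppose the feedback arc set S = S(σ) is minimum (|S(σ)| ≤ |S(τ)| for every ordering τ) and the subdigraph D_S arc-induced by S is an (s,t)-directed star for some s, t ≥ 1. Let m be the number of feedback intervals of S with respect to σ. Then D is k-Always Winnable if and only if gcd(k, m) = 1. -/

import Mathlib

open scoped Classical

/-- A digraph (given by its domination relation `adj`) is `k`-Always Winnable if every labeling
of the vertices by `ZMod k` can be toggled to the zero labeling: `x v` records the number of
times vertex `v` is toggled. -/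
def kAW {V : Type*} [Fintype V] (adj : V → V → Prop) (k : ℕ) : Prop :=
  ∀ lam : V → ZMod k, ∃ x : V → ZMod k, ∀ v : V,
    lam v + x v + ∑ u ∈ Finset.univ.filter (fun u => adj u v), x u = 0

/-- The feedback arc set of the digraph `adj` with respect to the vertex ordering `σ`:
all arcs `(σ j, σ i)` with `σ j → σ i` and `i < j`. -/
noncomputable def feedbackArcSet {V : Type*} [Fintype V] (adj : V → V → Prop)
    {n : ℕ} (σ : Fin n ≃ V) : Finset (V × V) :=
  Finset.univ.filter fun p : V × V => adj p.1 p.2 ∧ σ.symm p.2 < σ.symm p.1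

/-- `v` is a head feedback vertex: it is the head of some arc of the feedback arc set. -/
def isHeadFeedback {V : Type*} [Fintype V] (adj : V → V → Prop)
    {n : ℕ} (σ : Fin n ≃ V) (v : V) : Prop :=
  ∃ u : V, (u, v) ∈ feedbackArcSet adj σ

/-- `v` is a tail feedback vertex: it is the tail of some arc of the feedback arc set. -/
def isTailFeedback {V : Type*} [Fintype V] (adj : V → V → Prop)
    {n : ℕ} (σ : Fin n ≃ V) (v : V) : Prop :=
  ∃ w : V, (v, w) ∈ feedbackArcSet adj σ

/-- The positions `i ≤ j` delimit a head feedback interval: all of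
`σ i, σ (i+1), …, σ j` are head feedback vertices, and the neighbors `σ (i-1)` and
`σ (j+1)`, when they exist, are not. -/
def isHeadInterval {V : Type*} [Fintype V] (adj : V → V → Prop)
    {n : ℕ} (σ : Fin n ≃ V) (i j : Fin n) : Prop :=
  i ≤ j ∧ (∀ t : Fin n, i ≤ t → t ≤ j → isHeadFeedback adj σ (σ t)) ∧
    (∀ i' : Fin n, (i' : ℕ) + 1 = (i : ℕ) → ¬ isHeadFeedback adj σ (σ i')) ∧
    (∀ j' : Fin n, (j' : ℕ) = (j : ℕ) + 1 → ¬ isHeadFeedback adj σ (σ j'))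

/-- The positions `i ≤ j` delimit a tail feedback interval: all of
`σ i, σ (i+1), …, σ j` are tail feedback vertices, and the neighbors `σ (i-1)` and
`σ (j+1)`, when they exist, are not. -/
def isTailInterval {V : Type*} [Fintype V] (adj : V → V → Prop)
    {n : ℕ} (σ : Fin n ≃ V) (i j : Fin n) : Prop :=
  i ≤ j ∧ (∀ t : Fin n, i ≤ t → t ≤ j → isTailFeedback adj σ (σ t)) ∧
    (∀ i' : Fin n, (i' : ℕ) + 1 = (i : ℕ) → ¬ isTailFeedback adj σ (σ i')) ∧
    (∀ j' : Fin n, (j' : ℕ) = (j : ℕ) + 1 → ¬ isTailFeedback adj σ (σ j'))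

/-- The number of feedback intervals (head feedback intervals or tail feedback intervals,
an interval that is both being counted once), each interval being recorded by the pair of
positions of its endpoints in the ordering `σ`. -/
noncomputable def numFeedbackIntervals {V : Type*} [Fintype V] (adj : V → V → Prop)
    {n : ℕ} (σ : Fin n ≃ V) : ℕ :=
  (Finset.univ.filter fun p : Fin n × Fin n =>
    isHeadInterval adj σ p.1 p.2 ∨ isTailInterval adj σ p.1 p.2).card

private def finPred {n : ℕ} (i : Fin n) : Fin n :=
  ⟨i.1 - 1, lt_of_le_of_lt (Nat.sub_le _ _) i.2⟩

private lemma swap_lemma {V : Type*} [Fintype V] (adj : V → V → Prop)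
    (htour : ∀ u v : V, u ≠ v → (adj u v ↔ ¬ adj v u))
    {n : ℕ} (σ : Fin n ≃ V)
    (hmin : ∀ τ : Fin n ≃ V, (feedbackArcSet adj σ).card ≤ (feedbackArcSet adj τ).card)
    (q r : Fin n) (hqr : (r : ℕ) = (q : ℕ) + 1) (harc : adj (σ r) (σ q)) : False := by
  have hqrne : q ≠ r := by
    intro h; rw [h] at hqr; omega
  set τ : Fin n ≃ V := (Equiv.swap q r).trans σ with hτ
  have hτsymm : ∀ v : V, τ.symm v = Equiv.swap q r (σ.symm v) := by
    intro v; simp [hτ, Equiv.symm_apply_eq, Equiv.swap_apply_self]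
  have hnoarc : ¬ adj (σ q) (σ r) := by
    intro h
    exact ((htour (σ q) (σ r) (fun hh => hqrne (σ.injective hh))).1 h) harc
  have hsub : feedbackArcSet adj τ ⊆ feedbackArcSet adj σ := by
    intro uw hm
    simp only [feedbackArcSet, Finset.mem_filter, Finset.mem_univ, true_and] at hm ⊢
    obtain ⟨ha, hlt⟩ := hm
    refine ⟨ha, ?_⟩
    rw [hτsymm, hτsymm] at hlt
    set i := σ.symm uw.2 with hi
    set j := σ.symm uw.1 with hj
    have h2 : uw.2 = σ i := by rw [hi, Equiv.apply_symm_apply]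
    have h1 : uw.1 = σ j := by rw [hj, Equiv.apply_symm_apply]
    have hbad : ¬ (i = r ∧ j = q) := by
      rintro ⟨rfl, rfl⟩
      rw [h1, h2] at ha
      exact hnoarc ha
    simp only [Equiv.swap_apply_def] at hlt
    rw [Fin.lt_def] at hlt ⊢
    split_ifs at hlt with e1 e2 e3 e4 e5 e6 e7 e8 <;>
      first
      | (exfalso; exact hbad ⟨by assumption, by assumption⟩)
      | (simp only [Fin.ext_iff] at * <;> omega)
      | omega
  have hmem : (σ r, σ q) ∈ feedbackArcSet adj σ := by
    simp only [feedbackArcSet, Finset.mem_filter, Finset.mem_univ, true_and,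
      Equiv.symm_apply_apply]
    exact ⟨harc, by rw [Fin.lt_def]; omega⟩
  have hnot : (σ r, σ q) ∉ feedbackArcSet adj τ := by
    simp only [feedbackArcSet, Finset.mem_filter, Finset.mem_univ, true_and]
    rintro ⟨-, hlt⟩
    rw [hτsymm, hτsymm] at hlt
    simp only [Equiv.symm_apply_apply, Equiv.swap_apply_left, Equiv.swap_apply_right] at hlt
    rw [Fin.lt_def] at hlt; omega
  have : (feedbackArcSet adj τ).card < (feedbackArcSet adj σ).card :=
    Finset.card_lt_card ⟨hsub, fun hss => hnot (hss hmem)⟩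
  exact absurd (hmin τ) (by omega)

private lemma interval_count {n : ℕ} (X : Finset (Fin n)) :
    (Finset.univ.filter fun pq : Fin n × Fin n =>
      pq.1 ≤ pq.2 ∧ (∀ t : Fin n, pq.1 ≤ t → t ≤ pq.2 → t ∈ X) ∧
      (∀ i' : Fin n, (i' : ℕ) + 1 = (pq.1 : ℕ) → i' ∉ X) ∧
      (∀ j' : Fin n, (j' : ℕ) = (pq.2 : ℕ) + 1 → j' ∉ X)).card
    = (X.filter fun i : Fin n => (i : ℕ) = 0 ∨ finPred i ∉ X).card := by
  apply Finset.card_nbij (fun pq => pq.1)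
  · intro pq hpq
    simp only [Finset.mem_coe, Finset.mem_filter, Finset.mem_univ, true_and] at hpq ⊢
    obtain ⟨hle, hmid, hleft, -⟩ := hpq
    refine ⟨hmid pq.1 le_rfl hle, ?_⟩
    by_cases h0 : (pq.1 : ℕ) = 0
    · exact Or.inl h0
    · exact Or.inr (hleft (finPred pq.1) (by simp [finPred]; omega))
  · intro pq1 h1 pq2 h2 heq
    simp only [Finset.coe_filter, Set.mem_setOf_eq, Finset.mem_univ, true_and] at h1 h2
    obtain ⟨hle1, hmid1, -, hright1⟩ := h1
    obtain ⟨hle2, hmid2, -, hright2⟩ := h2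
    dsimp at heq
    have hsnd : pq1.2 = pq2.2 := by
      by_contra hne
      rcases Nat.lt_or_ge (pq1.2 : ℕ) (pq2.2 : ℕ) with h | h
      · have hlt : (pq1.2 : ℕ) + 1 < n := by
          have := pq2.2.isLt; omega
        set j'' : Fin n := ⟨(pq1.2 : ℕ) + 1, hlt⟩ with hj''
        have hmem : j'' ∈ X := by
          apply hmid2 j''
          · rw [← heq]; rw [Fin.le_def] at hle1 ⊢; simp [hj'']; omega
          · rw [Fin.le_def]; simp [hj'']; omega
        exact hright1 j'' (by simp [hj'']) hmem
      · rcases Nat.lt_or_ge (pq2.2 : ℕ) (pq1.2 : ℕ) with h' | h'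
        · have hlt : (pq2.2 : ℕ) + 1 < n := by
            have := pq1.2.isLt; omega
          set j'' : Fin n := ⟨(pq2.2 : ℕ) + 1, hlt⟩ with hj''
          have hmem : j'' ∈ X := by
            apply hmid1 j''
            · rw [heq]; rw [Fin.le_def] at hle2 ⊢; simp [hj'']; omega
            · rw [Fin.le_def]; simp [hj'']; omega
          exact hright2 j'' (by simp [hj'']) hmem
        · exact hne (Fin.ext (by omega))
    exact Prod.ext heq hsnd
  · intro i hi
    simp only [Finset.coe_filter, Set.mem_setOf_eq, Finset.mem_filter] at hi
    obtain ⟨hiX, hileft⟩ := hi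
    set C : Finset (Fin n) :=
      Finset.univ.filter (fun j => i ≤ j ∧ ∀ t : Fin n, i ≤ t → t ≤ j → t ∈ X) with hC
    have hiC : i ∈ C := by
      simp only [hC, Finset.mem_filter, Finset.mem_univ, true_and]
      exact ⟨le_rfl, fun t h1 h2 => (le_antisymm h2 h1) ▸ hiX⟩
    have hCne : C.Nonempty := ⟨i, hiC⟩
    set j : Fin n := C.max' hCne with hj
    have hjC : j ∈ C := C.max'_mem hCne
    simp only [hC, Finset.mem_filter, Finset.mem_univ, true_and] at hjC
    refine ⟨(i, j), ?_, rfl⟩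
    simp only [Finset.mem_coe, Finset.mem_filter, Finset.mem_univ, true_and]
    refine ⟨hjC.1, hjC.2, ?_, ?_⟩
    · intro i' hi' hi'X
      rcases hileft with h0 | hpre
      · omega
      · exact hpre (by rwa [show finPred i = i' from Fin.ext (by simp [finPred]; omega)])
    · intro j' hj' hj'X
      have hj'C : j' ∈ C := by
        simp only [hC, Finset.mem_filter, Finset.mem_univ, true_and]
        constructor
        · rw [Fin.le_def] at hjC ⊢; have := hjC.1; omega
        · intro t ht1 ht2
          rcases Nat.lt_or_ge (t : ℕ) ((j : ℕ) + 1) with h | h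
          · exact hjC.2 t ht1 (by rw [Fin.le_def]; omega)
          · rw [Fin.le_def, hj'] at ht2
            rw [show t = j' from Fin.ext (by omega)]
            exact hj'X
      have := C.le_max' j' hj'C
      rw [← hj, Fin.le_def] at this
      omega

/-- A strongly connected tournament with a minimum feedback arc set that arc-induces an
`(s,t)`-directed star, having `m` feedback intervals, is `k`-AW iff `gcd(k, m) = 1`. -/
theorem kAW_iff_of_star_feedback {V : Type*} [Fintype V]
    (adj : V → V → Prop) (hirr : ∀ v : V, ¬ adj v v)
    (htour : ∀ u v : V, u ≠ v → (adj u v ↔ ¬ adj v u))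
    (hstrong : ∀ v w : V, Relation.ReflTransGen adj v w)
    (k : ℕ) (hk : 2 ≤ k)
    {n : ℕ} (hn : Fintype.card V = n) (σ : Fin n ≃ V)
    (hmin : ∀ τ : Fin n ≃ V, (feedbackArcSet adj σ).card ≤ (feedbackArcSet adj τ).card)
    (s t : ℕ) (hs : 1 ≤ s) (ht : 1 ≤ t)
    -- the subdigraph arc-induced by the feedback arc set is an `(s,t)`-directed star
    (hstar : ∃ (c : V) (f : Fin s → V) (g : Fin t → V),
      Function.Injective f ∧ Function.Injective g ∧
      (∀ i, f i ≠ c) ∧ (∀ j, g j ≠ c) ∧ (∀ i j, f i ≠ g j) ∧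
      (∀ u w : V, (u, w) ∈ feedbackArcSet adj σ ↔
        ((∃ i, u = f i ∧ w = c) ∨ (u = c ∧ ∃ j, w = g j))))
    (m : ℕ) (hm : numFeedbackIntervals adj σ = m) :
    kAW adj k ↔ Nat.gcd k m = 1 := by
  
  classical
  haveI : NeZero k := ⟨by omega⟩
  obtain ⟨c, f, g, hfinj, hginj, hfc, hgc, hfg, hchar⟩ := hstar
  set p : Fin n := σ.symm c with hp
  set A' : Finset (Fin n) :=
    Finset.univ.filter (fun j => (σ j, c) ∈ feedbackArcSet adj σ) with hA'
  set B' : Finset (Fin n) :=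
    Finset.univ.filter (fun j => (c, σ j) ∈ feedbackArcSet adj σ) with hB'
  have memFAS : ∀ u w : V, (u, w) ∈ feedbackArcSet adj σ ↔
      adj u w ∧ σ.symm w < σ.symm u := by
    intro u w; simp [feedbackArcSet]
  --基本事实
  have hA'lt : ∀ j ∈ A', p < j := by
    intro j hj
    rw [hA', Finset.mem_filter] at hj
    have := (memFAS _ _).1 hj.2
    simpa [hp, Equiv.symm_apply_apply] using this.2
  have hB'lt : ∀ j ∈ B', j < p := by
    intro j hj
    rw [hB', Finset.mem_filter] at hj
    have := (memFAS _ _).1 hj.2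
    simpa [hp, Equiv.symm_apply_apply] using this.2
  have hpA : p ∉ A' := fun h => lt_irrefl _ (hA'lt _ h)
  have hpB : p ∉ B' := fun h => lt_irrefl _ (hB'lt _ h)
  have hA0 : A'.Nonempty := by
    refine ⟨σ.symm (f ⟨0, hs⟩), ?_⟩
    rw [hA', Finset.mem_filter]
    exact ⟨Finset.mem_univ _, by
      rw [Equiv.apply_symm_apply]
      exact (hchar _ _).2 (Or.inl ⟨⟨0, hs⟩, rfl, rfl⟩)⟩
  have hB0 : B'.Nonempty := by
    refine ⟨σ.symm (g ⟨0, ht⟩), ?_⟩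
    rw [hB', Finset.mem_filter]
    exact ⟨Finset.mem_univ _, by
      rw [Equiv.apply_symm_apply]
      exact (hchar _ _).2 (Or.inr ⟨rfl, ⟨0, ht⟩, rfl⟩)⟩
  have hfaschar : ∀ i j : Fin n, ((σ j, σ i) ∈ feedbackArcSet adj σ) ↔
      ((i = p ∧ j ∈ A') ∨ (j = p ∧ i ∈ B')) := by
    intro i j
    constructor
    · intro h
      rcases (hchar _ _).1 h with ⟨l, hu, hw⟩ | ⟨hu, l, hw⟩
      · left
        have hip : i = p := by rw [hp, ← hw, Equiv.symm_apply_apply]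
        refine ⟨hip, ?_⟩
        rw [hA', Finset.mem_filter]
        exact ⟨Finset.mem_univ _, by rwa [hw] at h⟩
      · right
        have hjp : j = p := by rw [hp, ← hu, Equiv.symm_apply_apply]
        refine ⟨hjp, ?_⟩
        rw [hB', Finset.mem_filter]
        exact ⟨Finset.mem_univ _, by rwa [hu] at h⟩
    · rintro (⟨rfl, hj⟩ | ⟨rfl, hi⟩)
      · rw [hA', Finset.mem_filter] at hj
        have := hj.2
        rwa [show c = σ p from by rw [hp, Equiv.apply_symm_apply]] at this
      · rw [hB', Finset.mem_filter] at hi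
        have := hi.2
        rwa [show c = σ p from by rw [hp, Equiv.apply_symm_apply]] at this
  have hadj_of_lt : ∀ i j : Fin n, (i : ℕ) < (j : ℕ) →
      (adj (σ j) (σ i) ↔ (i = p ∧ j ∈ A') ∨ (j = p ∧ i ∈ B')) := by
    intro i j h
    rw [← hfaschar i j, memFAS]
    simp only [Equiv.symm_apply_apply]
    rw [and_iff_left (show i < j from by rw [Fin.lt_def]; omega)]
  have hadjmem : ∀ i j : Fin n, adj (σ j) (σ i) ↔
      (((j : ℕ) < (i : ℕ) ∧ ¬(j = p ∧ i ∈ A') ∧ ¬(i = p ∧ j ∈ B')) ∨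
       ((i : ℕ) < (j : ℕ) ∧ ((i = p ∧ j ∈ A') ∨ (j = p ∧ i ∈ B')))) := by
    intro i j
    rcases lt_trichotomy (j : ℕ) (i : ℕ) with h | h | h
    · have hne : σ j ≠ σ i := fun hh => by
        have := σ.injective hh; rw [this] at h; omega
      rw [htour _ _ hne, hadj_of_lt j i h]
      constructor
      · intro hn2
        exact Or.inl ⟨h, fun hc => hn2 (Or.inl hc), fun hc => hn2 (Or.inr hc)⟩
      · rintro (⟨-, h1, h2⟩ | ⟨hlt, -⟩)
        · rintro (hc | hc)
          · exact h1 hc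
          · exact h2 hc
        · omega
    · have : j = i := Fin.ext h
      subst this
      constructor
      · intro hc; exact absurd hc (hirr _)
      · rintro (⟨hlt, -⟩ | ⟨hlt, -⟩) <;> omega
    · rw [hadj_of_lt i j h]
      constructor
      · intro hd; exact Or.inr ⟨h, hd⟩
      · rintro (⟨hlt, -⟩ | ⟨-, hd⟩)
        · omega
        · exact hd
  -- minimality consequences
  have hminB : ∀ b ∈ B', (b : ℕ) + 1 ≠ (p : ℕ) := by
    intro b hb hc
    apply swap_lemma adj htour σ hmin b p hc.symm
    exact ((memFAS _ _).1 ((hfaschar b p).2 (Or.inr ⟨rfl, hb⟩))).1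
  have hminA : ∀ a ∈ A', (a : ℕ) ≠ (p : ℕ) + 1 := by
    intro a ha hc
    apply swap_lemma adj htour σ hmin p a hc
    exact ((memFAS _ _).1 ((hfaschar p a).2 (Or.inl ⟨rfl, ha⟩))).1
  have hp1 : 1 ≤ (p : ℕ) := by
    obtain ⟨b, hb⟩ := hB0
    have := hB'lt b hb
    rw [Fin.lt_def] at this
    omega
  -- facts about predecessors
  have hpreP_A : finPred p ∉ A' := by
    intro h
    have := hA'lt _ h
    rw [Fin.lt_def] at this
    simp only [finPred] at this
    omega
  have hpreP_B : finPred p ∉ B' := by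
    intro h
    exact hminB _ h (by simp only [finPred]; omega)
  have hpreP_ne : finPred p ≠ p := by
    intro h
    have := congrArg Fin.val h
    simp only [finPred] at this
    omega
  have haval : ∀ a ∈ A', (p : ℕ) + 2 ≤ (a : ℕ) := by
    intro a ha
    have h1 := hA'lt a ha
    have h2 := hminA a ha
    rw [Fin.lt_def] at h1
    omega
  have hpreA_B : ∀ a ∈ A', finPred a ∉ B' := by
    intro a ha h
    have h1 := haval a ha
    have h2 := hB'lt _ h
    rw [Fin.lt_def] at h2
    simp only [finPred] at h2
    omega
  have hpreA_ne : ∀ a ∈ A', finPred a ≠ p := by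
    intro a ha h
    have h1 := haval a ha
    have := congrArg Fin.val h
    simp only [finPred] at this
    omega
  have hbval : ∀ b ∈ B', (b : ℕ) < (p : ℕ) := by
    intro b hb
    have := hB'lt b hb
    rwa [Fin.lt_def] at this
  have hpreB_A : ∀ b ∈ B', finPred b ∉ A' := by
    intro b hb h
    have h1 := hbval b hb
    have h2 := hA'lt _ h
    rw [Fin.lt_def] at h2
    simp only [finPred] at h2
    omega
  have hpreB_ne : ∀ b ∈ B', finPred b ≠ p := by
    intro b hb h
    have h1 := hbval b hb
    have := congrArg Fin.val h
    simp only [finPred] at this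
    omega
  have hAB : ∀ x : Fin n, x ∈ A' → x ∈ B' → False := by
    intro x hxa hxb
    have h1 := hA'lt x hxa
    have h2 := hB'lt x hxb
    exact absurd (h1.trans h2) (lt_irrefl _)
  -- master formula for the in-neighbor sum
  have hsumT : ∀ (y : Fin n → ZMod k) (i : Fin n),
      ∑ j ∈ Finset.univ.filter (fun j => adj (σ j) (σ i)), y j
        = (∑ j ∈ Finset.Iio i, y j)
          + (if i = p then (∑ j ∈ A', y j) - (∑ j ∈ B', y j) else 0)
          + (if i ∈ B' then y p else 0) - (if i ∈ A' then y p else 0) := by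
    intro y i
    by_cases hip : i = p
    · have hfeq : Finset.univ.filter (fun j => adj (σ j) (σ i))
          = (Finset.Iio i \ B') ∪ A' := by
        ext j
        simp only [Finset.mem_filter, Finset.mem_univ, true_and, Finset.mem_union,
          Finset.mem_sdiff, Finset.mem_Iio]
        rw [hadjmem]
        constructor
        · rintro (⟨hlt, h1, h2⟩ | ⟨hlt, (⟨hip2, hjA⟩ | ⟨hjp, hiB⟩)⟩)
          · exact Or.inl ⟨by rw [Fin.lt_def]; omega, fun hc => h2 ⟨hip, hc⟩⟩
          · exact Or.inr hjA
          · exact absurd (hip ▸ hiB) hpB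
        · rintro (⟨hlt, hjB⟩ | hjA)
          · rw [Fin.lt_def] at hlt
            exact Or.inl ⟨hlt, fun ⟨hjp, hiA⟩ => hpA (hip ▸ hiA), fun ⟨_, hc⟩ => hjB hc⟩
          · have := hA'lt j hjA
            rw [Fin.lt_def, hip] at *
            exact Or.inr ⟨by omega, Or.inl ⟨hip, hjA⟩⟩
      have hBsub : B' ⊆ Finset.Iio i := by
        intro b hb
        rw [Finset.mem_Iio, hip]
        exact hB'lt b hb
      have hdisj : Disjoint (Finset.Iio i \ B') A' := by
        rw [Finset.disjoint_right]
        intro a ha hmem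
        rw [Finset.mem_sdiff, Finset.mem_Iio] at hmem
        have := hA'lt a ha
        rw [Fin.lt_def] at *
        rw [hip] at hmem
        omega
      rw [hfeq, Finset.sum_union hdisj, Finset.sum_sdiff_eq_sub hBsub,
        if_pos hip, if_neg (hip ▸ hpB), if_neg (hip ▸ hpA)]
      ring
    · by_cases hiB : i ∈ B'
      · have hfeq : Finset.univ.filter (fun j => adj (σ j) (σ i))
            = insert p (Finset.Iio i) := by
          ext j
          simp only [Finset.mem_filter, Finset.mem_univ, true_and, Finset.mem_insert,
            Finset.mem_Iio]
          rw [hadjmem]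
          constructor
          · rintro (⟨hlt, h1, h2⟩ | ⟨hlt, (⟨hip2, hjA⟩ | ⟨hjp, hiB2⟩)⟩)
            · exact Or.inr (by rw [Fin.lt_def]; omega)
            · exact absurd hip2 hip
            · exact Or.inl hjp
          · rintro (rfl | hjlt)
            · have := hbval i hiB
              exact Or.inr ⟨by omega, Or.inr ⟨rfl, hiB⟩⟩
            · rw [Fin.lt_def] at hjlt
              exact Or.inl ⟨hjlt, fun ⟨hjp, hiA⟩ => hAB i hiA hiB,
                fun ⟨hip2, _⟩ => hip hip2⟩
        have hpIio : p ∉ Finset.Iio i := by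
          rw [Finset.mem_Iio, Fin.lt_def]
          have := hbval i hiB
          omega
        rw [hfeq, Finset.sum_insert hpIio, if_neg hip, if_pos hiB,
          if_neg (fun hc => hAB i hc hiB)]
        ring
      · by_cases hiA : i ∈ A'
        · have hfeq : Finset.univ.filter (fun j => adj (σ j) (σ i))
              = Finset.Iio i \ {p} := by
            ext j
            simp only [Finset.mem_filter, Finset.mem_univ, true_and, Finset.mem_sdiff,
              Finset.mem_Iio, Finset.mem_singleton]
            rw [hadjmem]
            constructor
            · rintro (⟨hlt, h1, h2⟩ | ⟨hlt, (⟨hip2, hjA⟩ | ⟨hjp, hiB2⟩)⟩)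
              · exact ⟨by rw [Fin.lt_def]; omega, fun hc => h1 ⟨hc, hiA⟩⟩
              · exact absurd hip2 hip
              · exact absurd hiB2 hiB
            · rintro ⟨hjlt, hjne⟩
              rw [Fin.lt_def] at hjlt
              exact Or.inl ⟨hjlt, fun ⟨hjp, _⟩ => hjne hjp, fun ⟨hip2, _⟩ => hip hip2⟩
          have hpsub : {p} ⊆ Finset.Iio i := by
            intro x hx
            rw [Finset.mem_singleton] at hx
            rw [hx, Finset.mem_Iio]
            exact hA'lt i hiA
          rw [hfeq, Finset.sum_sdiff_eq_sub hpsub, Finset.sum_singleton,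
            if_neg hip, if_neg hiB, if_pos hiA]
          ring
        · have hfeq : Finset.univ.filter (fun j => adj (σ j) (σ i)) = Finset.Iio i := by
            ext j
            simp only [Finset.mem_filter, Finset.mem_univ, true_and, Finset.mem_Iio]
            rw [hadjmem]
            constructor
            · rintro (⟨hlt, h1, h2⟩ | ⟨hlt, (⟨hip2, hjA⟩ | ⟨hjp, hiB2⟩)⟩)
              · rw [Fin.lt_def]; omega
              · exact absurd hip2 hip
              · exact absurd hiB2 hiB
            · intro hjlt
              rw [Fin.lt_def] at hjlt
              exact Or.inl ⟨hjlt, fun ⟨hjp, hiA2⟩ => hiA hiA2, fun ⟨hip2, _⟩ => hip hip2⟩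
          rw [hfeq, if_neg hip, if_neg hiB, if_neg hiA]
          ring
  -- interval-run counts
  set rA : ℕ := (A'.filter (fun a : Fin n => (a : ℕ) = 0 ∨ finPred a ∉ A')).card with hrA
  set rB : ℕ := (B'.filter (fun b : Fin n => (b : ℕ) = 0 ∨ finPred b ∉ B')).card with hrB
  set M : ℕ := rA + rB + 1 with hM
  -- Iic/Iio plumbing
  have hIic_pred : ∀ i : Fin n, (i : ℕ) ≠ 0 → Finset.Iic (finPred i) = Finset.Iio i := by
    intro i h0
    ext j
    simp only [Finset.mem_Iic, Finset.mem_Iio, Fin.le_def, Fin.lt_def, finPred]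
    omega
  have hIic_zero : ∀ i : Fin n, (i : ℕ) = 0 → Finset.Iic i = {i} := by
    intro i h0
    ext j
    simp only [Finset.mem_Iic, Finset.mem_singleton, Fin.le_def, Fin.ext_iff]
    omega
  have hIic_split : ∀ i : Fin n, Finset.Iic i = insert i (Finset.Iio i) := by
    intro i
    rw [Finset.Iio_insert]
  have hiIio : ∀ i : Fin n, i ∉ Finset.Iio i := by
    intro i h
    rw [Finset.mem_Iio] at h
    exact lt_irrefl _ h
  -- sum of an indicator
  have hsum_ind : ∀ (s : Finset (Fin n)) (P : Fin n → Prop) (cst : ZMod k),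
      (∑ x ∈ s, if P x then cst else 0) = ((s.filter P).card : ℕ) • cst := by
    intro s P cst
    rw [← Finset.sum_filter, Finset.sum_const]
  -- the kernel lemma
  have hker : ∀ y : Fin n → ZMod k,
      (∀ i : Fin n, y i + ∑ j ∈ Finset.univ.filter (fun j => adj (σ j) (σ i)), y j = 0) →
      ((M : ZMod k) * y p = 0 ∧ (y p = 0 → ∀ i, y i = 0)) := by
    intro y hy
    set S : Fin n → ZMod k := fun i => ∑ j ∈ Finset.Iic i, y j with hSdef
    set z : ZMod k := y p with hz
    set w : ZMod k := (∑ j ∈ A', y j) - (∑ j ∈ B', y j) with hw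
    have hS : ∀ i : Fin n, S i = -((if i = p then w else 0) + (if i ∈ B' then z else 0)
        - (if i ∈ A' then z else 0)) := by
      intro i
      have h1 := hy i
      rw [hsumT y i] at h1
      have h2 : S i = y i + ∑ j ∈ Finset.Iio i, y j := by
        rw [hSdef]
        simp only
        rw [hIic_split i, Finset.sum_insert (hiIio i)]
      rw [h2]
      linear_combination h1
    have hyd : ∀ i : Fin n, (i : ℕ) ≠ 0 → y i = S i - S (finPred i) := by
      intro i h0
      have h2 : S i = y i + ∑ j ∈ Finset.Iio i, y j := by
        rw [hSdef]; simp only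
        rw [hIic_split i, Finset.sum_insert (hiIio i)]
      have h3 : S (finPred i) = ∑ j ∈ Finset.Iio i, y j := by
        rw [hSdef]; simp only [hIic_pred i h0]
      rw [h2, h3]; ring
    have hy0 : ∀ i : Fin n, (i : ℕ) = 0 → y i = S i := by
      intro i h0
      rw [hSdef]; simp only [hIic_zero i h0, Finset.sum_singleton]
    -- z = -w
    have hzw : z = -w := by
      have h1 := hyd p (by omega)
      rw [hS p, hS (finPred p)] at h1
      rw [if_pos rfl, if_neg hpB, if_neg hpA, if_neg hpreP_ne, if_neg hpreP_B,
        if_neg hpreP_A] at h1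
      rw [hz]
      linear_combination h1
    -- sum over A'
    have hsA : ∑ a ∈ A', y a = (rA : ℕ) • z := by
      have hcongr : ∀ a ∈ A', y a = if (a : ℕ) = 0 ∨ finPred a ∉ A' then z else 0 := by
        intro a ha
        have ha0 : (a : ℕ) ≠ 0 := by
          have := haval a ha; omega
        rw [hyd a ha0, hS a, hS (finPred a)]
        rw [if_neg (fun hc : a = p => hpA (hc ▸ ha)), if_pos ha,
          if_neg (fun hc => hAB a ha hc),
          if_neg (hpreA_ne a ha), if_neg (hpreA_B a ha)]
        by_cases hpa : finPred a ∈ A'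
        · rw [if_pos hpa, if_neg (by simp [ha0, hpa])]
          ring
        · rw [if_neg hpa, if_pos (Or.inr hpa)]
          ring
      rw [Finset.sum_congr rfl hcongr, ← Finset.sum_filter, Finset.sum_const]
    -- sum over B'
    have hsB : ∑ b ∈ B', y b = (rB : ℕ) • (-z) := by
      have hcongr : ∀ b ∈ B', y b = if (b : ℕ) = 0 ∨ finPred b ∉ B' then -z else 0 := by
        intro b hb
        by_cases hb0 : (b : ℕ) = 0
        · rw [if_pos (Or.inl hb0), hy0 b hb0, hS b]
          rw [if_neg (fun hc : b = p => hpB (hc ▸ hb)), if_pos hb,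
            if_neg (fun hc => hAB b hc hb)]
          ring
        · rw [hyd b hb0, hS b, hS (finPred b)]
          rw [if_neg (fun hc : b = p => hpB (hc ▸ hb)), if_pos hb,
            if_neg (fun hc => hAB b hc hb),
            if_neg (hpreB_ne b hb), if_neg (hpreB_A b hb)]
          by_cases hpb : finPred b ∈ B'
          · rw [if_pos hpb, if_neg (by simp [hb0, hpb])]
            ring
          · rw [if_neg hpb, if_pos (Or.inr hpb)]
            ring
      rw [Finset.sum_congr rfl hcongr, ← Finset.sum_filter, Finset.sum_const]
    have hwz : w = ((rA : ℕ) : ZMod k) * z + ((rB : ℕ) : ZMod k) * z := by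
      rw [hw, hsA, hsB]
      rw [nsmul_eq_mul, nsmul_eq_mul]
      ring
    constructor
    · rw [hM]
      push_cast
      have h2 : ((rA : ZMod k) + (rB : ZMod k) + 1) * z = w + z := by
        rw [hwz]; ring
      rw [h2, hzw]
      first
        | exact add_neg_cancel w
        | exact add_right_neg w
    · intro hz0
      have hw0 : w = 0 := by
        have h := hzw
        rw [hz0] at h
        linear_combination h
      intro i
      by_cases h0 : (i : ℕ) = 0
      · rw [hy0 i h0, hS i, hz0, hw0]
        simp
      · rw [hyd i h0, hS i, hS (finPred i), hz0, hw0]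
        simp
  -- characterization of head/tail feedback vertices
  set H : Finset (Fin n) := insert p B' with hH
  set Tl : Finset (Fin n) := insert p A' with hTl
  have hheadchar : ∀ i : Fin n, isHeadFeedback adj σ (σ i) ↔ i ∈ H := by
    intro i
    constructor
    · rintro ⟨u, hu⟩
      rw [← Equiv.apply_symm_apply σ u] at hu
      rcases (hfaschar i (σ.symm u)).1 hu with ⟨hip, -⟩ | ⟨-, hiB⟩
      · rw [hH, hip]; exact Finset.mem_insert_self _ _
      · rw [hH]; exact Finset.mem_insert_of_mem hiB
    · intro hi
      rw [hH, Finset.mem_insert] at hi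
      rcases hi with rfl | hiB
      · obtain ⟨a, ha⟩ := hA0
        exact ⟨σ a, (hfaschar p a).2 (Or.inl ⟨rfl, ha⟩)⟩
      · exact ⟨σ p, (hfaschar i p).2 (Or.inr ⟨rfl, hiB⟩)⟩
  have htailchar : ∀ i : Fin n, isTailFeedback adj σ (σ i) ↔ i ∈ Tl := by
    intro i
    constructor
    · rintro ⟨u, hu⟩
      rw [← Equiv.apply_symm_apply σ u] at hu
      rcases (hfaschar (σ.symm u) i).1 hu with ⟨-, hiA⟩ | ⟨hip, -⟩
      · rw [hTl]; exact Finset.mem_insert_of_mem hiA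
      · rw [hTl, hip]; exact Finset.mem_insert_self _ _
    · intro hi
      rw [hTl, Finset.mem_insert] at hi
      rcases hi with rfl | hiA
      · obtain ⟨b, hb⟩ := hB0
        exact ⟨σ b, (hfaschar b p).2 (Or.inr ⟨rfl, hb⟩)⟩
      · exact ⟨σ p, (hfaschar p i).2 (Or.inl ⟨rfl, hiA⟩)⟩
  -- counting head intervals
  have hHcount : (Finset.univ.filter fun pq : Fin n × Fin n =>
      isHeadInterval adj σ pq.1 pq.2).card
      = (H.filter fun i : Fin n => (i : ℕ) = 0 ∨ finPred i ∉ H).card := by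
    rw [show (Finset.univ.filter fun pq : Fin n × Fin n => isHeadInterval adj σ pq.1 pq.2)
        = (Finset.univ.filter fun pq : Fin n × Fin n =>
          pq.1 ≤ pq.2 ∧ (∀ t : Fin n, pq.1 ≤ t → t ≤ pq.2 → t ∈ H) ∧
          (∀ i' : Fin n, (i' : ℕ) + 1 = (pq.1 : ℕ) → i' ∉ H) ∧
          (∀ j' : Fin n, (j' : ℕ) = (pq.2 : ℕ) + 1 → j' ∉ H)) from by
      ext pq
      simp only [Finset.mem_filter, Finset.mem_univ, true_and]
      unfold isHeadInterval
      simp only [hheadchar]]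
    exact interval_count H
  have hTcount : (Finset.univ.filter fun pq : Fin n × Fin n =>
      isTailInterval adj σ pq.1 pq.2).card
      = (Tl.filter fun i : Fin n => (i : ℕ) = 0 ∨ finPred i ∉ Tl).card := by
    rw [show (Finset.univ.filter fun pq : Fin n × Fin n => isTailInterval adj σ pq.1 pq.2)
        = (Finset.univ.filter fun pq : Fin n × Fin n =>
          pq.1 ≤ pq.2 ∧ (∀ t : Fin n, pq.1 ≤ t → t ≤ pq.2 → t ∈ Tl) ∧
          (∀ i' : Fin n, (i' : ℕ) + 1 = (pq.1 : ℕ) → i' ∉ Tl) ∧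
          (∀ j' : Fin n, (j' : ℕ) = (pq.2 : ℕ) + 1 → j' ∉ Tl)) from by
      ext pq
      simp only [Finset.mem_filter, Finset.mem_univ, true_and]
      unfold isTailInterval
      simp only [htailchar]]
    exact interval_count Tl
  have hmemH : ∀ x : Fin n, x ∈ H ↔ (x = p ∨ x ∈ B') := by
    intro x; rw [hH, Finset.mem_insert]
  have hmemT : ∀ x : Fin n, x ∈ Tl ↔ (x = p ∨ x ∈ A') := by
    intro x; rw [hTl, Finset.mem_insert]
  have hHleft : (H.filter fun i : Fin n => (i : ℕ) = 0 ∨ finPred i ∉ H).card = rB + 1 := by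
    have heq : H.filter (fun i : Fin n => (i : ℕ) = 0 ∨ finPred i ∉ H)
        = insert p (B'.filter (fun b : Fin n => (b : ℕ) = 0 ∨ finPred b ∉ B')) := by
      ext x
      constructor
      · intro hx
        have hxH := (Finset.mem_filter.1 hx).1
        have hxl := (Finset.mem_filter.1 hx).2
        rcases (hmemH x).1 hxH with heqx | hxB
        · exact Finset.mem_insert.2 (Or.inl heqx)
        · refine Finset.mem_insert.2 (Or.inr (Finset.mem_filter.2 ⟨hxB, ?_⟩))
          rcases hxl with h0 | hpre
          · exact Or.inl h0
          · exact Or.inr (fun hc => hpre ((hmemH _).2 (Or.inr hc)))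
      · intro hx
        rcases Finset.mem_insert.1 hx with heqx | hxB'
        · subst heqx
          refine Finset.mem_filter.2 ⟨(hmemH p).2 (Or.inl rfl), Or.inr ?_⟩
          intro hc
          rcases (hmemH _).1 hc with hpp | hPB
          · exact hpreP_ne hpp
          · exact hpreP_B hPB
        · have hxB := (Finset.mem_filter.1 hxB').1
          have hQ := (Finset.mem_filter.1 hxB').2
          refine Finset.mem_filter.2 ⟨(hmemH x).2 (Or.inr hxB), ?_⟩
          rcases hQ with h0 | hpre
          · exact Or.inl h0
          · refine Or.inr (fun hc => ?_)
            rcases (hmemH _).1 hc with hpp | hPB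
            · exact hpreB_ne x hxB hpp
            · exact hpre hPB
    rw [heq, Finset.card_insert_of_notMem (fun hc => hpB (Finset.mem_filter.1 hc).1), hrB]
  have hTleft : (Tl.filter fun i : Fin n => (i : ℕ) = 0 ∨ finPred i ∉ Tl).card = rA + 1 := by
    have heq : Tl.filter (fun i : Fin n => (i : ℕ) = 0 ∨ finPred i ∉ Tl)
        = insert p (A'.filter (fun a : Fin n => (a : ℕ) = 0 ∨ finPred a ∉ A')) := by
      ext x
      constructor
      · intro hx
        have hxH := (Finset.mem_filter.1 hx).1
        have hxl := (Finset.mem_filter.1 hx).2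
        rcases (hmemT x).1 hxH with heqx | hxB
        · exact Finset.mem_insert.2 (Or.inl heqx)
        · refine Finset.mem_insert.2 (Or.inr (Finset.mem_filter.2 ⟨hxB, ?_⟩))
          rcases hxl with h0 | hpre
          · exact Or.inl h0
          · exact Or.inr (fun hc => hpre ((hmemT _).2 (Or.inr hc)))
      · intro hx
        rcases Finset.mem_insert.1 hx with heqx | hxB'
        · subst heqx
          refine Finset.mem_filter.2 ⟨(hmemT p).2 (Or.inl rfl), Or.inr ?_⟩
          intro hc
          rcases (hmemT _).1 hc with hpp | hPB
          · exact hpreP_ne hpp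
          · exact hpreP_A hPB
        · have hxB := (Finset.mem_filter.1 hxB').1
          have hQ := (Finset.mem_filter.1 hxB').2
          refine Finset.mem_filter.2 ⟨(hmemT x).2 (Or.inr hxB), ?_⟩
          rcases hQ with h0 | hpre
          · exact Or.inl h0
          · refine Or.inr (fun hc => ?_)
            rcases (hmemT _).1 hc with hpp | hPB
            · exact hpreA_ne x hxB hpp
            · exact hpre hPB
    rw [heq, Finset.card_insert_of_notMem (fun hc => hpA (Finset.mem_filter.1 hc).1), hrA]
  have hboth : (Finset.univ.filter fun pq : Fin n × Fin n =>
      isHeadInterval adj σ pq.1 pq.2 ∧ isTailInterval adj σ pq.1 pq.2) = {((p, p) : Fin n × Fin n)} := by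
    ext pq
    simp only [Finset.mem_filter, Finset.mem_univ, true_and, Finset.mem_singleton]
    constructor
    · rintro ⟨⟨hle1, hmid1, -, -⟩, ⟨-, hmid2, -, -⟩⟩
      have hfst : pq.1 = p := by
        have h1 := (hheadchar pq.1).1 (hmid1 pq.1 le_rfl hle1)
        have h2 := (htailchar pq.1).1 (hmid2 pq.1 le_rfl hle1)
        rcases (hmemH _).1 h1 with heq1 | hB2
        · exact heq1
        · rcases (hmemT _).1 h2 with heq2 | hA2
          · exact heq2
          · exact absurd hB2 (fun hc => hAB _ hA2 hc)
      have hsnd : pq.2 = p := by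
        have h1 := (hheadchar pq.2).1 (hmid1 pq.2 hle1 le_rfl)
        have h2 := (htailchar pq.2).1 (hmid2 pq.2 hle1 le_rfl)
        rcases (hmemH _).1 h1 with heq1 | hB2
        · exact heq1
        · rcases (hmemT _).1 h2 with heq2 | hA2
          · exact heq2
          · exact absurd hB2 (fun hc => hAB _ hA2 hc)
      exact Prod.ext hfst hsnd
    · intro hpq
      rw [hpq]
      show isHeadInterval adj σ p p ∧ isTailInterval adj σ p p
      constructor
      · refine ⟨le_rfl, ?_, ?_, ?_⟩
        · intro u hu1 hu2
          rw [le_antisymm hu2 hu1]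
          exact (hheadchar p).2 ((hmemH p).2 (Or.inl rfl))
        · intro i' hi'
          rw [hheadchar, hmemH]
          push_neg
          constructor
          · intro hc; rw [hc] at hi'; omega
          · intro hc; exact hminB i' hc hi'
        · intro j' hj'
          rw [hheadchar, hmemH]
          push_neg
          constructor
          · intro hc; rw [hc] at hj'; omega
          · intro hc
            have := hbval j' hc
            omega
      · refine ⟨le_rfl, ?_, ?_, ?_⟩
        · intro u hu1 hu2
          rw [le_antisymm hu2 hu1]
          exact (htailchar p).2 ((hmemT p).2 (Or.inl rfl))
        · intro i' hi'
          rw [htailchar, hmemT]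
          push_neg
          constructor
          · intro hc; rw [hc] at hi'; omega
          · intro hc
            have := haval i' hc
            omega
        · intro j' hj'
          rw [htailchar, hmemT]
          push_neg
          constructor
          · intro hc; rw [hc] at hj'; omega
          · intro hc; exact hminA j' hc hj'
  have hmcount : numFeedbackIntervals adj σ = M := by
    have hunion : (Finset.univ.filter fun pq : Fin n × Fin n =>
          isHeadInterval adj σ pq.1 pq.2 ∨ isTailInterval adj σ pq.1 pq.2)
        = (Finset.univ.filter fun pq : Fin n × Fin n => isHeadInterval adj σ pq.1 pq.2)
          ∪ (Finset.univ.filter fun pq : Fin n × Fin n => isTailInterval adj σ pq.1 pq.2) := by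
      ext pq
      simp only [Finset.mem_filter, Finset.mem_univ, true_and, Finset.mem_union]
    have hinter : (Finset.univ.filter fun pq : Fin n × Fin n =>
          isHeadInterval adj σ pq.1 pq.2 ∧ isTailInterval adj σ pq.1 pq.2)
        = (Finset.univ.filter fun pq : Fin n × Fin n => isHeadInterval adj σ pq.1 pq.2)
          ∩ (Finset.univ.filter fun pq : Fin n × Fin n => isTailInterval adj σ pq.1 pq.2) := by
      ext pq
      simp only [Finset.mem_filter, Finset.mem_univ, true_and, Finset.mem_inter]
    have hcui := Finset.card_union_add_card_inter
      (Finset.univ.filter fun pq : Fin n × Fin n => isHeadInterval adj σ pq.1 pq.2)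
      (Finset.univ.filter fun pq : Fin n × Fin n => isTailInterval adj σ pq.1 pq.2)
    rw [← hunion, ← hinter, hboth] at hcui
    rw [Finset.card_singleton] at hcui
    have hval : numFeedbackIntervals adj σ = (Finset.univ.filter fun pq : Fin n × Fin n =>
        isHeadInterval adj σ pq.1 pq.2 ∨ isTailInterval adj σ pq.1 pq.2).card := rfl
    rw [hval]
    rw [hHcount, hHleft] at hcui
    rw [hTcount, hTleft] at hcui
    rw [hM]
    omega
  -- reindexing sums over V to sums over Fin n
  have hVsum : ∀ (x : V → ZMod k) (i : Fin n),
      (∑ u ∈ Finset.univ.filter (fun u => adj u (σ i)), x u)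
        = ∑ j ∈ Finset.univ.filter (fun j => adj (σ j) (σ i)), x (σ j) := by
    intro x i
    rw [Finset.sum_filter, Finset.sum_filter]
    exact (Equiv.sum_comp σ (fun u => if adj u (σ i) then x u else 0)).symm
  -- the toggling map
  set Phi : (V → ZMod k) → (V → ZMod k) :=
    fun x v => x v + ∑ u ∈ Finset.univ.filter (fun u => adj u v), x u with hPhi
  have hPhiFin : ∀ (x : V → ZMod k) (i : Fin n),
      Phi x (σ i) = x (σ i) + ∑ j ∈ Finset.univ.filter (fun j => adj (σ j) (σ i)), x (σ j) := by
    intro x i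
    rw [hPhi]
    simp only
    rw [hVsum x i]
  have hkAW_iff : kAW adj k ↔ Function.Surjective Phi := by
    constructor
    · intro hkaw lam
      obtain ⟨x, hx⟩ := hkaw (fun v => -lam v)
      refine ⟨x, funext fun v => ?_⟩
      have := hx v
      rw [hPhi]
      simp only
      linear_combination this
    · intro hsurj lam
      obtain ⟨x, hx⟩ := hsurj (fun v => -lam v)
      refine ⟨x, fun v => ?_⟩
      have := congrFun hx v
      rw [hPhi] at this
      simp only at this
      linear_combination this
  rw [← hm, hmcount, hkAW_iff]
  constructor
  · -- surjective → gcd = 1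
    intro hsurj
    by_contra hg
    set d : ℕ := Nat.gcd k M with hd
    have hd1 : d ∣ k := Nat.gcd_dvd_left _ _
    have hd2 : d ∣ M := Nat.gcd_dvd_right _ _
    have hdne : d ≠ 0 := by
      intro hc
      rw [hd] at hc
      have := Nat.eq_zero_of_gcd_eq_zero_left hc
      omega
    have hd2' : 2 ≤ d := by
      rcases Nat.lt_or_ge d 2 with h | h
      · interval_cases d
        · exact absurd rfl hdne
        · exact absurd rfl hg
      · exact h
    set z0 : ZMod k := ((k / d : ℕ) : ZMod k) with hz0
    have hkd_pos : 0 < k / d := Nat.div_pos (Nat.le_of_dvd (by omega) hd1) (by omega)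
    have hkd_lt : k / d < k := Nat.div_lt_self (by omega) (by omega)
    have hz0ne : z0 ≠ 0 := by
      rw [hz0, Ne, ZMod.natCast_eq_zero_iff]
      intro hdvd
      have := Nat.le_of_dvd hkd_pos hdvd
      omega
    have hMz : (M : ZMod k) * z0 = 0 := by
      have h1 : M * (k / d) = (M / d) * k := by
        obtain ⟨e, he⟩ := hd2
        obtain ⟨l, hl⟩ := hd1
        rw [he, hl, Nat.mul_div_cancel_left l (by omega : 0 < d),
          Nat.mul_div_cancel_left e (by omega : 0 < d)]
        ring
      have h2 : (M : ZMod k) * z0 = ((M * (k / d) : ℕ) : ZMod k) := by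
        rw [hz0]; push_cast; ring
      rw [h2, h1]
      push_cast [ZMod.natCast_self]
      ring
    -- explicit kernel vector
    set F : Fin n → ZMod k := fun i =>
      z0 * ((if i ∈ A' then 1 else 0) - (if i ∈ B' then 1 else 0) + (if i = p then 1 else 0))
      with hF
    set y : Fin n → ZMod k :=
      fun i => F i - (if (i : ℕ) = 0 then 0 else F (finPred i)) with hydef
    have hyexp : ∀ i : Fin n, y i = F i - (if (i : ℕ) = 0 then 0 else F (finPred i)) := by
      intro i; rw [hydef]
    have hFp : F p = z0 := by
      rw [hF]; simp [hpA, hpB]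
    have hFpreP : F (finPred p) = 0 := by
      rw [hF]; simp only [if_neg hpreP_A, if_neg hpreP_B, if_neg hpreP_ne]; ring
    have hyp0 : y p = z0 := by
      rw [hyexp p, if_neg (by omega : ¬ (p : ℕ) = 0), hFp, hFpreP]
      ring
    have hSF : ∀ (l : ℕ) (i : Fin n), (i : ℕ) = l → (∑ j ∈ Finset.Iic i, y j) = F i := by
      intro l
      induction l using Nat.strong_induction_on with
      | _ l ih =>
        intro i hil
        by_cases h0 : (i : ℕ) = 0
        · rw [hIic_zero i h0, Finset.sum_singleton, hyexp i, if_pos h0]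
          ring
        · rw [hIic_split i, Finset.sum_insert (hiIio i), ← hIic_pred i h0,
            ih (finPred i : ℕ) (by simp only [finPred]; omega) (finPred i) rfl,
            hyexp i, if_neg h0]
          ring
    have hsAy : (∑ a ∈ A', y a) = ((A'.filter (fun a : Fin n => (a : ℕ) = 0 ∨ finPred a ∉ A')).card) • z0 := by
      have hcongr : ∀ a ∈ A', y a = if (a : ℕ) = 0 ∨ finPred a ∉ A' then z0 else 0 := by
        intro a ha
        have ha0 : ¬ (a : ℕ) = 0 := by have := haval a ha; omega
        rw [hyexp a, if_neg ha0, hF]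
        simp only [if_pos ha, if_neg (fun hc : a = p => hpA (hc ▸ ha)),
          if_neg (fun hc => hAB a ha hc), if_neg (hpreA_B a ha), if_neg (hpreA_ne a ha)]
        by_cases hpa : finPred a ∈ A'
        · rw [if_pos hpa, if_neg (by simp [ha0, hpa])]
          ring
        · rw [if_neg hpa, if_pos (Or.inr hpa)]
          ring
      rw [Finset.sum_congr rfl hcongr, ← Finset.sum_filter, Finset.sum_const]
    have hsBy : (∑ b ∈ B', y b) = ((B'.filter (fun b : Fin n => (b : ℕ) = 0 ∨ finPred b ∉ B')).card) • (-z0) := by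
      have hcongr : ∀ b ∈ B', y b = if (b : ℕ) = 0 ∨ finPred b ∉ B' then -z0 else 0 := by
        intro b hb
        by_cases hb0 : (b : ℕ) = 0
        · rw [if_pos (Or.inl hb0), hyexp b, if_pos hb0, hF]
          simp only [if_pos hb, if_neg (fun hc : b = p => hpB (hc ▸ hb)),
            if_neg (fun hc => hAB b hc hb)]
          ring
        · rw [hyexp b, if_neg hb0, hF]
          simp only [if_pos hb, if_neg (fun hc : b = p => hpB (hc ▸ hb)),
            if_neg (fun hc => hAB b hc hb), if_neg (hpreB_A b hb), if_neg (hpreB_ne b hb)]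
          by_cases hpb : finPred b ∈ B'
          · rw [if_pos hpb, if_neg (by simp [hb0, hpb])]
            ring
          · rw [if_neg hpb, if_pos (Or.inr hpb)]
            ring
      rw [Finset.sum_congr rfl hcongr, ← Finset.sum_filter, Finset.sum_const]
    have hwy : (∑ a ∈ A', y a) - (∑ b ∈ B', y b) = -z0 := by
      rw [hsAy, hsBy, ← hrA, ← hrB, nsmul_eq_mul, nsmul_eq_mul]
      have hMz' := hMz
      rw [hM] at hMz'
      push_cast at hMz'
      linear_combination hMz'
    have hEy : ∀ i : Fin n,
        y i + ∑ j ∈ Finset.univ.filter (fun j => adj (σ j) (σ i)), y j = 0 := by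
      intro i
      have hIio_sum : (∑ j ∈ Finset.Iio i, y j)
          = if (i : ℕ) = 0 then 0 else F (finPred i) := by
        by_cases h0 : (i : ℕ) = 0
        · rw [if_pos h0]
          have he : Finset.Iio i = ∅ := by
            ext j
            simp only [Finset.mem_Iio, Fin.lt_def, Finset.notMem_empty, iff_false]
            omega
          rw [he, Finset.sum_empty]
        · rw [if_neg h0, ← hIic_pred i h0]
          exact hSF (finPred i : ℕ) (finPred i) rfl
      rw [hsumT y i, hIio_sum, hwy, hyp0, hyexp i, hF]
      simp only
      split_ifs <;> ring
    -- transport to V and contradict injectivity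
    have hfin : Finite (V → ZMod k) := by infer_instance
    have hinj : Function.Injective Phi := Finite.injective_iff_surjective.2 hsurj
    have hPhiy : Phi (fun v => y (σ.symm v)) = Phi (fun _ => 0) := by
      funext v
      have h1 : Phi (fun v => y (σ.symm v)) (σ (σ.symm v)) = 0 := by
        rw [hPhiFin (fun v => y (σ.symm v)) (σ.symm v)]
        have h2 : (∑ j ∈ Finset.univ.filter (fun j => adj (σ j) (σ (σ.symm v))),
            y (σ.symm (σ j)))
            = ∑ j ∈ Finset.univ.filter (fun j => adj (σ j) (σ (σ.symm v))), y j :=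
          Finset.sum_congr rfl (fun j _ => by rw [Equiv.symm_apply_apply])
        rw [h2, Equiv.symm_apply_apply]
        exact hEy (σ.symm v)
      rw [Equiv.apply_symm_apply] at h1
      rw [h1, hPhi]
      simp
    have := congrFun (hinj hPhiy) (σ p)
    simp only [Equiv.symm_apply_apply] at this
    rw [hyp0] at this
    exact hz0ne this
  · -- gcd = 1 → surjective
    intro hg
    have hMunit : IsUnit ((M : ℕ) : ZMod k) := by
      rw [ZMod.isUnit_iff_coprime]
      exact Nat.coprime_comm.1 hg
    have hinj : Function.Injective Phi := by
      intro x1 x2 h12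
      set y : Fin n → ZMod k := fun i => x1 (σ i) - x2 (σ i) with hydef
      have hEy : ∀ i : Fin n,
          y i + ∑ j ∈ Finset.univ.filter (fun j => adj (σ j) (σ i)), y j = 0 := by
        intro i
        have e1 : Phi x1 (σ i) = Phi x2 (σ i) := congrFun h12 (σ i)
        rw [hPhiFin x1 i, hPhiFin x2 i] at e1
        have hsub : (∑ j ∈ Finset.univ.filter (fun j => adj (σ j) (σ i)), y j)
            = (∑ j ∈ Finset.univ.filter (fun j => adj (σ j) (σ i)), x1 (σ j))
              - ∑ j ∈ Finset.univ.filter (fun j => adj (σ j) (σ i)), x2 (σ j) := by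
          rw [← Finset.sum_sub_distrib]
          all_goals exact Finset.sum_congr rfl (fun j _ => by rw [hydef])
        have h4 : y i = x1 (σ i) - x2 (σ i) := by rw [hydef]
        rw [hsub, h4]
        linear_combination e1
      have hker1 := hker y hEy
      have hz : y p = 0 := (IsUnit.mul_right_eq_zero hMunit).1 hker1.1
      have hy0 := hker1.2 hz
      funext v
      have h3 := hy0 (σ.symm v)
      rw [hydef] at h3
      simp only [Equiv.apply_symm_apply] at h3
      exact sub_eq_zero.1 h3
    exact Finite.injective_iff_surjective.1 hinj
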